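/- Let 𝒮 be a triangulated category with an object G such that 𝒮 = ⟨G⟩_{n+1} for some n ∈ ℕ (G is a strong generator) and Hom_𝒮(G[i], G) = 0 for all i ≥ d+1, where d ∈ ℕ. Then fd(𝒮, G) ≤ n(d+1) < ∞; that is, every object F of 𝒮 with Hom(G[j], F) = 0 for all j ≥ 1 lies in ⟨G⟩_{n+1}^{[-n(d+1),∞)} ⊆ ⟨G⟩^{[0,∞)}[n(d+1)]. -/

import Mathlib

open CategoryTheory Limits Pretriangulated

universe v u

namespace Paper

variable (C : Type u) [Category.{v} C] [HasZeroObject C] [HasShift C ℤ]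
  [Preadditive C] [∀ n : ℤ, (shiftFunctor C n).Additive] [Pretriangulated C]

/-- `Z` is a direct sum of `X` and `Y`. -/
def IsDirSum {C : Type u} [Category.{v} C] [Preadditive C] (Z X Y : C) : Prop :=
  ∃ (i₁ : X ⟶ Z) (i₂ : Y ⟶ Z) (p₁ : Z ⟶ X) (p₂ : Z ⟶ Y),
    i₁ ≫ p₁ = 𝟙 X ∧ i₂ ≫ p₂ = 𝟙 Y ∧ i₁ ≫ p₂ = 0 ∧ i₂ ≫ p₁ = 0 ∧
    p₁ ≫ i₁ + p₂ ≫ i₂ = 𝟙 Z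

/-- The extension `A * B` of two classes of objects. -/
def star (A B : Set C) : Set C :=
  {Z | ∃ (X Y : C) (f : X ⟶ Z) (g : Z ⟶ Y) (h : Y ⟶ (X⟦(1:ℤ)⟧ : C)),
      X ∈ A ∧ Y ∈ B ∧ Triangle.mk f g h ∈ distTriang C}

/-- Closure of a class of objects under finite direct sums and isomorphism. -/
inductive addClos (A : Set C) : C → Prop
  | of {X Y : C} (e : X ≅ Y) (hY : Y ∈ A) : addClos A X
  | zero {X : C} (hX : IsZero X) : addClos A X
  | dirSum {Z X Y : C} (hX : addClos A X) (hY : addClos A Y) (h : IsDirSum Z X Y) :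
      addClos A Z

/-- `coprodN A n` is `coprod_n (A)`; by convention `coprodN A 0` consists of zero objects. -/
def coprodN (A : Set C) : ℕ → Set C
  | 0 => {X | IsZero X}
  | 1 => setOf (addClos C A)
  | (n+2) => star C (setOf (addClos C A)) (coprodN A (n+1))

/-- Direct summands of objects in `A`. -/
def smd (A : Set C) : Set C := {X | ∃ (Z Y : C), Z ∈ A ∧ IsDirSum Z X Y}

/-- The class `G[I] = {G[-i] : i ∈ I}` (up to isomorphism). -/
def shiftsOf (G : C) (I : Set ℤ) : Set C :=
  {X | ∃ i ∈ I, Nonempty (X ≅ (G⟦(-i : ℤ)⟧ : C))}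

/-- `⟨G⟩ₙ^I := smd (coprodₙ (G[I]))`. -/
def genN (G : C) (I : Set ℤ) (n : ℕ) : Set C := smd C (coprodN C (shiftsOf C G I) n)

/-- `⟨G⟩^I := ⋃_{n > 0} ⟨G⟩ₙ^I`. -/
def gen (G : C) (I : Set ℤ) : Set C := {X | ∃ n : ℕ, X ∈ genN C G I (n+1)}

/-- The right orthogonal `G[I]^⊥`. -/
def rPerpShifts (G : C) (I : Set ℤ) : Set C :=
  {Y | ∀ i ∈ I, ∀ f : (G⟦(-i : ℤ)⟧ : C) ⟶ Y, f = 0}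

/-- `fd(𝒮, G) ≤ m` : `G(-∞,-1]^⊥ ⊆ ⟨G⟩^{[0,∞)}[m] = ⟨G⟩^{[-m,∞)}`. -/
def fdLE (G : C) (m : ℤ) : Prop :=
  ∀ X ∈ rPerpShifts C G (Set.Iic (-1)), X ∈ gen C G (Set.Ici (-m))

/-- `fd(𝒮ᵒᵖ, Gᵒᵖ) ≤ m`, expressed inside `𝒮`. -/
def fdOpLE (G : C) (m : ℤ) : Prop :=
  ∀ X : C, (∀ j : ℤ, j ≤ -1 → ∀ f : X ⟶ (G⟦j⟧ : C), f = 0) →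
    X ∈ gen C G (Set.Iic m)

/-- A t-structure on `C`, given by its aisle `le = 𝒮^{≤0}` and coaisle `ge = 𝒮^{≥0}`. -/
structure TStructure where
  le : Set C
  ge : Set C
  le_iso : ∀ ⦃X Y : C⦄, (X ≅ Y) → X ∈ le → Y ∈ le
  ge_iso : ∀ ⦃X Y : C⦄, (X ≅ Y) → X ∈ ge → Y ∈ ge
  le_shift : ∀ X ∈ le, (X⟦(1:ℤ)⟧ : C) ∈ le
  ge_shift : ∀ X ∈ ge, (X⟦(-1:ℤ)⟧ : C) ∈ ge
  hom_zero : ∀ X ∈ le, ∀ Y ∈ ge, ∀ f : (X⟦(1:ℤ)⟧ : C) ⟶ Y, f = 0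
  triangle : ∀ X : C, ∃ (A B : C) (_ : A ∈ le) (_ : B ∈ ge)
      (f : ((A⟦(1:ℤ)⟧ : C)) ⟶ X) (g : X ⟶ B) (h : B ⟶ ((A⟦(1:ℤ)⟧ : C)⟦(1:ℤ)⟧)),
      Triangle.mk f g h ∈ distTriang C

variable {C}

/-- bounded above: `𝒮 = ⋃ₙ 𝒮^{≤n}`. -/
def TStructure.BoundedAbove (T : TStructure C) : Prop :=
  ∀ X : C, ∃ n : ℕ, (X⟦(n : ℤ)⟧ : C) ∈ T.le

/-- bounded below: `𝒮 = ⋃ₙ 𝒮^{≥-n}`. -/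
def TStructure.BoundedBelow (T : TStructure C) : Prop :=
  ∀ X : C, ∃ n : ℕ, (X⟦(-(n : ℤ))⟧ : C) ∈ T.ge

/-- bounded t-structure. -/
def TStructure.Bounded (T : TStructure C) : Prop :=
  T.BoundedAbove ∧ T.BoundedBelow

/-- A good metric on `C`. -/
structure IsGoodMetric (M : ℕ → Set C) : Prop where
  zero_mem : ∀ n : ℕ, ∀ X : C, IsZero X → X ∈ M n
  ext : ∀ n : ℕ, star C (M n) (M n) ⊆ M n
  shift_neg : ∀ n : ℕ, ∀ X ∈ M (n+1), (X⟦(-1:ℤ)⟧ : C) ∈ M n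
  mono : ∀ n : ℕ, ∀ X ∈ M (n+1), X ∈ M n
  shift_pos : ∀ n : ℕ, ∀ X ∈ M (n+1), (X⟦(1:ℤ)⟧ : C) ∈ M n

variable (C)

/-- A chain of morphisms indexed by `ℕ`. -/
structure Chain where
  X : ℕ → C
  f : ∀ n : ℕ, X n ⟶ X (n+1)

/-- `Z` is a cone of `f : A ⟶ B`. -/
def IsConeOf {A B : C} (Z : C) (f : A ⟶ B) : Prop :=
  ∃ (g : B ⟶ Z) (h : Z ⟶ (A⟦(1:ℤ)⟧ : C)), Triangle.mk f g h ∈ distTriang C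

variable {C}

/-- Cauchy sequence with respect to a (good) metric `M`. -/
def Chain.IsCauchy (c : Chain C) (M : ℕ → Set C) : Prop :=
  ∀ i : ℕ, ∃ N : ℕ, ∀ j : ℕ, N ≤ j → ∃ Z : C, IsConeOf C Z (c.f j) ∧ Z ∈ M i


section Aux
set_option linter.unusedSectionVars false

/-- `Hom(G⟦j⟧, W) = 0` for all `j ≥ B`. -/
def GVan (G : C) (B : ℤ) (W : C) : Prop :=
  ∀ j : ℤ, B ≤ j → ∀ f : (G⟦j⟧ : C) ⟶ W, f = 0

lemma GVan.mono {G W : C} {B B' : ℤ} (h : GVan G B W) (hBB' : B ≤ B') : GVan G B' W :=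
  fun j hj f => h j (le_trans hBB' hj) f

lemma GVan.of_iso {G W W' : C} {B : ℤ} (h : GVan G B W) (e : W ≅ W') : GVan G B W' := by
  intro j hj f
  have : (f ≫ e.inv) ≫ e.hom = f := by simp
  rw [← this, h j hj (f ≫ e.inv), Limits.zero_comp]

lemma GVan.shift_up {G W : C} {B : ℤ} (h : GVan G B W) : GVan G (B+1) ((W⟦(1:ℤ)⟧ : C)) := by
  intro j hj f
  let e₁ : (G⟦(j-1:ℤ)⟧ : C) ≅ ((G⟦j⟧)⟦(-1:ℤ)⟧ : C) :=
    (shiftFunctorAdd' C j (-1) (j-1) (by ring)).app G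
  let e₂ : ((W⟦(1:ℤ)⟧)⟦(-1:ℤ)⟧ : C) ≅ W := (shiftFunctorCompIsoId C (1:ℤ) (-1:ℤ) (by ring)).app W
  have h0 : e₁.hom ≫ f⟦(-1:ℤ)⟧' ≫ e₂.hom = 0 := h (j-1) (by omega) _
  have h1 : f⟦(-1:ℤ)⟧' = e₁.inv ≫ (e₁.hom ≫ f⟦(-1:ℤ)⟧' ≫ e₂.hom) ≫ e₂.inv := by simp
  rw [h0] at h1
  simp only [Limits.zero_comp, Limits.comp_zero] at h1
  exact (shiftFunctor C (-1:ℤ)).map_injective (by rw [h1, Functor.map_zero])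

lemma GVan.shift_down {G W : C} {B : ℤ} (h : GVan G B W) : GVan G (B-1) ((W⟦(-1:ℤ)⟧ : C)) := by
  intro j hj f
  let e₁ : (G⟦(j+1:ℤ)⟧ : C) ≅ ((G⟦j⟧)⟦(1:ℤ)⟧ : C) :=
    (shiftFunctorAdd' C j (1:ℤ) (j+1) rfl).app G
  let e₂ : ((W⟦(-1:ℤ)⟧)⟦(1:ℤ)⟧ : C) ≅ W := (shiftFunctorCompIsoId C (-1:ℤ) (1:ℤ) (by ring)).app W
  have h0 : e₁.hom ≫ f⟦(1:ℤ)⟧' ≫ e₂.hom = 0 := h (j+1) (by omega) _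
  have h1 : f⟦(1:ℤ)⟧' = e₁.inv ≫ (e₁.hom ≫ f⟦(1:ℤ)⟧' ≫ e₂.hom) ≫ e₂.inv := by simp
  rw [h0] at h1
  simp only [Limits.zero_comp, Limits.comp_zero] at h1
  exact (shiftFunctor C (1:ℤ)).map_injective (by rw [h1, Functor.map_zero])

/-- If `Hom(G⟦i⟧, G) = 0` for `i ≥ d+1`, then `Hom(G⟦j⟧, G⟦-i⟧) = 0` when `j + i ≥ d + 1`. -/
lemma hom_shift_shift_zero {G : C} {d : ℕ}
    (hd : ∀ i : ℤ, (d : ℤ) + 1 ≤ i → ∀ f : (G⟦i⟧ : C) ⟶ G, f = 0)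
    {j i : ℤ} (hji : (d : ℤ) + 1 ≤ j + i) (f : (G⟦j⟧ : C) ⟶ (G⟦(-i : ℤ)⟧ : C)) : f = 0 := by
  let e₁ : (G⟦(j+i:ℤ)⟧ : C) ≅ ((G⟦j⟧)⟦i⟧ : C) := (shiftFunctorAdd' C j i (j+i) rfl).app G
  let e₂ : ((G⟦(-i:ℤ)⟧)⟦i⟧ : C) ≅ (G⟦(0:ℤ)⟧ : C) :=
    ((shiftFunctorAdd' C (-i) i 0 (by ring)).app G).symm
  let e₃ : (G⟦(0:ℤ)⟧ : C) ≅ G := (shiftFunctorZero C ℤ).app G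
  have h0 : e₁.hom ≫ f⟦i⟧' ≫ e₂.hom ≫ e₃.hom = 0 := hd (j+i) hji _
  have h1 : f⟦i⟧' = e₁.inv ≫ (e₁.hom ≫ f⟦i⟧' ≫ e₂.hom ≫ e₃.hom) ≫ e₃.inv ≫ e₂.inv := by simp
  rw [h0] at h1
  simp only [Limits.zero_comp, Limits.comp_zero] at h1
  exact (shiftFunctor C i).map_injective (by rw [h1, Functor.map_zero])

/-- Objects of `addClos (G[A,∞))` have no maps from `G⟦j⟧` for `j ≥ d+1-A`. -/
lemma gvan_of_addClos_Ici {G : C} {d : ℕ}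
    (hd : ∀ i : ℤ, (d : ℤ) + 1 ≤ i → ∀ f : (G⟦i⟧ : C) ⟶ G, f = 0)
    {A B : ℤ} (hB : (d : ℤ) + 1 - A ≤ B) {X : C}
    (hX : addClos C (shiftsOf C G (Set.Ici A)) X) : GVan G B X := by
  induction hX with
  | of e hY =>
    obtain ⟨i, hi, ⟨e'⟩⟩ := hY
    have hv : GVan G B (G⟦(-i:ℤ)⟧ : C) := by
      intro j hj f
      refine hom_shift_shift_zero hd ?_ f
      have : A ≤ i := hi
      omega
    exact (hv.of_iso e'.symm).of_iso e.symm
  | zero hX =>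
    intro j hj f
    exact hX.eq_of_tgt f 0
  | dirSum hX hY hsum ihX ihY =>
    obtain ⟨i₁, i₂, p₁, p₂, h1, h2, h3, h4, h5⟩ := hsum
    intro j hj f
    have : f = (f ≫ p₁) ≫ i₁ + (f ≫ p₂) ≫ i₂ := by
      rw [Category.assoc, Category.assoc, ← Preadditive.comp_add, h5, Category.comp_id]
    rw [this, ihX j hj (f ≫ p₁), ihY j hj (f ≫ p₂)]
    simp

/-- Maps from objects of `addClos (G(-∞,a]))` to a `B`-vanishing target are zero,
provided `B ≤ -a`. -/
lemma src_vanish {G : C} {a B : ℤ} (hab : B ≤ -a) {X W : C}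
    (hX : addClos C (shiftsOf C G (Set.Iic a)) X) (hW : GVan G B W) (f : X ⟶ W) : f = 0 := by
  induction hX with
  | of e hY =>
    obtain ⟨i, hi, ⟨e'⟩⟩ := hY
    have h0 : e'.inv ≫ e.inv ≫ f = 0 := by
      refine hW (-i) ?_ _
      have : i ≤ a := hi
      omega
    have : f = e.hom ≫ e'.hom ≫ (e'.inv ≫ e.inv ≫ f) := by simp
    rw [h0] at this
    simp only [Limits.comp_zero] at this
    exact this
  | zero hX => exact hX.eq_of_src f 0
  | dirSum hX hY hsum ihX ihY =>
    obtain ⟨i₁, i₂, p₁, p₂, h1, h2, h3, h4, h5⟩ := hsum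
    have : f = p₁ ≫ (i₁ ≫ f) + p₂ ≫ (i₂ ≫ f) := by
      rw [← Category.assoc, ← Category.assoc, ← Preadditive.add_comp, h5, Category.id_comp]
    rw [this, ihX (i₁ ≫ f), ihY (i₂ ≫ f)]
    simp

lemma IsDirSum.map {Z X Y : C} (h : IsDirSum Z X Y) (F : C ⥤ C) [F.Additive] :
    IsDirSum (F.obj Z) (F.obj X) (F.obj Y) := by
  obtain ⟨i₁, i₂, p₁, p₂, h1, h2, h3, h4, h5⟩ := h
  refine ⟨F.map i₁, F.map i₂, F.map p₁, F.map p₂, ?_, ?_, ?_, ?_, ?_⟩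
  · rw [← F.map_comp, h1, F.map_id]
  · rw [← F.map_comp, h2, F.map_id]
  · rw [← F.map_comp, h3, F.map_zero]
  · rw [← F.map_comp, h4, F.map_zero]
  · rw [← F.map_comp, ← F.map_comp, ← F.map_add, h5, F.map_id]

lemma IsDirSum.congr {Z Z' X X' Y Y' : C} (h : IsDirSum Z X Y)
    (eZ : Z ≅ Z') (eX : X ≅ X') (eY : Y ≅ Y') : IsDirSum Z' X' Y' := by
  obtain ⟨i₁, i₂, p₁, p₂, h1, h2, h3, h4, h5⟩ := h
  refine ⟨eX.inv ≫ i₁ ≫ eZ.hom, eY.inv ≫ i₂ ≫ eZ.hom, eZ.inv ≫ p₁ ≫ eX.hom,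
    eZ.inv ≫ p₂ ≫ eY.hom, ?_, ?_, ?_, ?_, ?_⟩
  · have h1' := reassoc_of% h1
    simp [h1']
  · have h2' := reassoc_of% h2
    simp [h2']
  · have h3' := reassoc_of% h3
    simp [h3']
  · have h4' := reassoc_of% h4
    simp [h4']
  · have : eZ.inv ≫ (p₁ ≫ i₁ + p₂ ≫ i₂) ≫ eZ.hom = 𝟙 Z' := by rw [h5]; simp
    rw [← this]
    simp [Preadditive.comp_add, Preadditive.add_comp]

lemma addClos_iso {A : Set C} {X Y : C} (e : X ≅ Y) (hY : addClos C A Y) : addClos C A X := by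
  induction hY generalizing X with
  | of e' hZ => exact addClos.of (e ≪≫ e') hZ
  | zero h => exact addClos.zero (h.of_iso e)
  | dirSum hX hY hsum ihX ihY =>
    exact addClos.dirSum hX hY (hsum.congr e.symm (Iso.refl _) (Iso.refl _))

lemma addClos_mono {A B : Set C} (hAB : A ⊆ B) {X : C} (hX : addClos C A X) :
    addClos C B X := by
  induction hX with
  | of e hY => exact addClos.of e (hAB hY)
  | zero h => exact addClos.zero h
  | dirSum hX hY hsum ihX ihY => exact addClos.dirSum ihX ihY hsum

lemma shiftsOf_mono {G : C} {I J : Set ℤ} (hIJ : I ⊆ J) :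
    shiftsOf C G I ⊆ shiftsOf C G J := by
  rintro X ⟨i, hi, he⟩
  exact ⟨i, hIJ hi, he⟩

/-- Shifting an `addClos (G(-∞,a])` object by `1`. -/
lemma addClos_shift_Iic {G : C} {a : ℤ} {X : C}
    (hX : addClos C (shiftsOf C G (Set.Iic a)) X) :
    addClos C (shiftsOf C G (Set.Iic (a-1))) ((X⟦(1:ℤ)⟧ : C)) := by
  induction hX with
  | of e hY =>
    obtain ⟨i, hi, ⟨e'⟩⟩ := hY
    refine addClos.of ((shiftFunctor C (1:ℤ)).mapIso (e ≪≫ e') ≪≫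
      ((shiftFunctorAdd' C (-i) 1 (-(i-1)) (by ring)).app G).symm) ⟨i-1, ?_, ⟨Iso.refl _⟩⟩
    have : i ≤ a := hi
    simpa using by omega
  | zero h =>
    refine addClos.zero ?_
    rw [IsZero.iff_id_eq_zero] at h ⊢
    simpa using congrArg (fun g => (shiftFunctor C (1:ℤ)).map g) h
  | dirSum hX hY hsum ihX ihY =>
    exact addClos.dirSum ihX ihY (hsum.map (shiftFunctor C (1:ℤ)))

/-- A distinguished triangle whose first morphism is a split mono realizes its middle
object as a direct sum of the two outer ones. -/
lemma isDirSum_of_splitMono (T : Triangle C) (hT : T ∈ distTriang C)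
    (π : T.obj₂ ⟶ T.obj₁) (hπ : T.mor₁ ≫ π = 𝟙 _) : IsDirSum T.obj₂ T.obj₁ T.obj₃ := by
  have h12 := comp_distTriang_mor_zero₁₂ T hT
  have h31 := comp_distTriang_mor_zero₃₁ T hT
  have h0 : T.mor₃ = 0 := by
    have : T.mor₃ ≫ (T.mor₁ ≫ π)⟦(1:ℤ)⟧' = T.mor₃ := by rw [hπ]; simp
    rw [← this, Functor.map_comp, ← Category.assoc, h31, Limits.zero_comp]
  obtain ⟨k, hk⟩ := Triangle.yoneda_exact₂ T hT (𝟙 T.obj₂ - π ≫ T.mor₁)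
    (by rw [Preadditive.comp_sub]; rw [← Category.assoc, hπ]; simp)
  -- hk : 𝟙 - π ≫ mor₁ = mor₂ ≫ k
  have hkg : k ≫ T.mor₂ = 𝟙 T.obj₃ := by
    have h1 : T.mor₂ ≫ (k ≫ T.mor₂ - 𝟙 T.obj₃) = 0 := by
      rw [Preadditive.comp_sub, ← Category.assoc, ← hk]
      rw [Preadditive.sub_comp, Category.id_comp, Category.assoc, h12]
      simp
    obtain ⟨z, hz⟩ := Triangle.yoneda_exact₃ T hT _ h1
    rw [h0, Limits.zero_comp] at hz
    rw [sub_eq_zero] at hz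
    exact hz
  refine ⟨T.mor₁, k - k ≫ π ≫ T.mor₁, π, T.mor₂, hπ, ?_, h12, ?_, ?_⟩
  · rw [Preadditive.sub_comp, hkg, Category.assoc, Category.assoc, h12]
    simp
  · rw [Preadditive.sub_comp, Category.assoc, Category.assoc, hπ, Category.comp_id, sub_self]
  · have e1 : T.mor₂ ≫ k ≫ π ≫ T.mor₁ = (𝟙 T.obj₂ - π ≫ T.mor₁) ≫ π ≫ T.mor₁ := by
      rw [← Category.assoc, ← Category.assoc, ← hk, Category.assoc]
    have e2 : (𝟙 T.obj₂ - π ≫ T.mor₁) ≫ π ≫ T.mor₁ = 0 := by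
      rw [Preadditive.sub_comp, Category.id_comp, Category.assoc,
        ← Category.assoc T.mor₁ π, hπ, Category.id_comp, sub_self]
    have h6 : T.mor₂ ≫ (k - k ≫ π ≫ T.mor₁) = 𝟙 T.obj₂ - π ≫ T.mor₁ := by
      rw [Preadditive.comp_sub, ← hk, ← Category.assoc, Category.assoc, e1, e2, sub_zero]
    rw [h6]
    abel

/-- Binary direct sums exist. -/
lemma buildDirSum (P Q : C) : ∃ S : C, IsDirSum S P Q := by
  obtain ⟨S, g, h, hT⟩ := distinguished_cocone_triangle (0 : (Q⟦(-1:ℤ)⟧ : C) ⟶ P)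
  obtain ⟨r, hr⟩ := Triangle.yoneda_exact₂ _ hT (𝟙 P) (by exact Limits.zero_comp)
  have hrot := rot_of_distTriang _ hT
  have hsum := isDirSum_of_splitMono _ hrot r (by exact hr.symm)
  exact ⟨S, hsum.congr (Iso.refl _) (Iso.refl _)
    ((shiftFunctorCompIsoId C (-1:ℤ) (1:ℤ) (by ring)).app Q)⟩

/-- Assembling direct sum decompositions. -/
lemma IsDirSum.assemble {Z X Y Xb Xg Yb Yg Sb Sg : C}
    (hZ : IsDirSum Z X Y) (hX : IsDirSum X Xb Xg) (hY : IsDirSum Y Yb Yg)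
    (hSb : IsDirSum Sb Xb Yb) (hSg : IsDirSum Sg Xg Yg) : IsDirSum Z Sb Sg := by
  obtain ⟨iX, iY, pX, pY, a1, a2, a3, a4, a5⟩ := hZ
  obtain ⟨ib, ig, pb, pg, b1, b2, b3, b4, b5⟩ := hX
  obtain ⟨jb, jg, qb, qg, c1, c2, c3, c4, c5⟩ := hY
  obtain ⟨u1, u2, v1, v2, d1, d2, d3, d4, d5⟩ := hSb
  obtain ⟨w1, w2, x1, x2, e1, e2, e3, e4, e5⟩ := hSg
  have a1' := reassoc_of% a1; have a2' := reassoc_of% a2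
  have a3' := reassoc_of% a3; have a4' := reassoc_of% a4
  have b1' := reassoc_of% b1; have b2' := reassoc_of% b2
  have b3' := reassoc_of% b3; have b4' := reassoc_of% b4
  have c1' := reassoc_of% c1; have c2' := reassoc_of% c2
  have c3' := reassoc_of% c3; have c4' := reassoc_of% c4
  have d1' := reassoc_of% d1; have d2' := reassoc_of% d2
  have d3' := reassoc_of% d3; have d4' := reassoc_of% d4
  have e1' := reassoc_of% e1; have e2' := reassoc_of% e2
  have e3' := reassoc_of% e3; have e4' := reassoc_of% e4
  refine ⟨v1 ≫ ib ≫ iX + v2 ≫ jb ≫ iY, x1 ≫ ig ≫ iX + x2 ≫ jg ≫ iY,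
    pX ≫ pb ≫ u1 + pY ≫ qb ≫ u2, pX ≫ pg ≫ w1 + pY ≫ qg ≫ w2, ?_, ?_, ?_, ?_, ?_⟩
  · simp only [Preadditive.add_comp, Preadditive.comp_add, Category.assoc,
      a1', a2', a3', a4', b1', b3', b4', c1', c3', c4',
      Limits.zero_comp, Limits.comp_zero, add_zero, zero_add]
    rw [d5]
  · simp only [Preadditive.add_comp, Preadditive.comp_add, Category.assoc,
      a1', a2', a3', a4', b2', b3', b4', c2', c3', c4',
      Limits.zero_comp, Limits.comp_zero, add_zero, zero_add]
    rw [e5]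
  · simp only [Preadditive.add_comp, Preadditive.comp_add, Category.assoc,
      a1', a2', a3', a4', b1', b2', b3', b4', c1', c2', c3', c4',
      d3', Limits.zero_comp, Limits.comp_zero, add_zero, zero_add]
  · simp only [Preadditive.add_comp, Preadditive.comp_add, Category.assoc,
      a1', a2', a3', a4', b1', b2', b3', b4', c1', c2', c3', c4',
      e4', Limits.zero_comp, Limits.comp_zero, add_zero, zero_add]
  · have hb : ∀ {T : C} (f : X ⟶ T), pb ≫ ib ≫ f = f - pg ≫ ig ≫ f := by
      intro T f
      have : (pb ≫ ib + pg ≫ ig) ≫ f = 𝟙 X ≫ f := by rw [b5]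
      simp only [Preadditive.add_comp, Category.assoc, Category.id_comp] at this
      rw [eq_sub_iff_add_eq]
      exact this
    have hc : ∀ {T : C} (f : Y ⟶ T), qb ≫ jb ≫ f = f - qg ≫ jg ≫ f := by
      intro T f
      have : (qb ≫ jb + qg ≫ jg) ≫ f = 𝟙 Y ≫ f := by rw [c5]
      simp only [Preadditive.add_comp, Category.assoc, Category.id_comp] at this
      rw [eq_sub_iff_add_eq]
      exact this
    simp only [Preadditive.add_comp, Preadditive.comp_add, Category.assoc,
      d1', d2', d3', d4', e1', e2', e3', e4',
      Limits.zero_comp, Limits.comp_zero, add_zero, zero_add]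
    rw [hb, hc]
    simp only [Preadditive.comp_sub]
    rw [← a5]
    abel

/-- Every `addClos` object over all shifts splits at a cutoff. -/
lemma addClos_split {G : C} (B : ℤ) {X : C}
    (hX : addClos C (shiftsOf C G Set.univ) X) :
    ∃ Xb Xg : C, IsDirSum X Xb Xg ∧ addClos C (shiftsOf C G (Set.Iic (-B))) Xb ∧
      addClos C (shiftsOf C G (Set.Ici (1-B))) Xg := by
  induction hX with
  | @of X Y e hY =>
    obtain ⟨i, _, ⟨e'⟩⟩ := hY
    obtain ⟨O, hO⟩ := HasZeroObject.zero (C := C)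
    rcases le_or_gt i (-B) with hi | hi
    · refine ⟨X, O, ⟨𝟙 X, 0, 𝟙 X, 0, by simp, hO.eq_of_src _ _, by simp, by simp, by simp⟩,
        addClos.of (e ≪≫ e') ⟨i, hi, ⟨Iso.refl _⟩⟩, addClos.zero hO⟩
    · refine ⟨O, X, ⟨0, 𝟙 X, 0, 𝟙 X, hO.eq_of_src _ _, by simp, by simp, by simp, by simp⟩,
        addClos.zero hO, addClos.of (e ≪≫ e') ⟨i, Set.mem_Ici.mpr (by omega), ⟨Iso.refl _⟩⟩⟩
  | @zero X hX =>
    exact ⟨X, X, ⟨𝟙 X, 0, 𝟙 X, 0, by simp, hX.eq_of_src _ _, by simp, by simp, by simp⟩,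
      addClos.zero hX, addClos.zero hX⟩
  | dirSum hX hY hsum ihX ihY =>
    obtain ⟨Xb1, Xg1, s1, m1b, m1g⟩ := ihX
    obtain ⟨Xb2, Xg2, s2, m2b, m2g⟩ := ihY
    obtain ⟨Sb, hSb⟩ := buildDirSum Xb1 Xb2
    obtain ⟨Sg, hSg⟩ := buildDirSum Xg1 Xg2
    exact ⟨Sb, Sg, hsum.assemble s1 s2 hSb hSg,
      addClos.dirSum m1b m2b hSb, addClos.dirSum m1g m2g hSg⟩

lemma coprodN_iso {A : Set C} (n : ℕ) {X Y : C} (e : X ≅ Y) (hY : Y ∈ coprodN C A n) :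
    X ∈ coprodN C A n := by
  match n with
  | 0 => exact hY.of_iso e
  | 1 => exact addClos_iso e hY
  | (n+2) =>
    obtain ⟨P, Q, f, g, h, hP, hQ, hT⟩ := hY
    refine ⟨P, Q, f ≫ e.inv, e.hom ≫ g, h, hP, hQ, ?_⟩
    refine isomorphic_distinguished _ hT _ ?_
    exact Triangle.isoMk _ _ (Iso.refl _) e (Iso.refl _)
      (by exact (by simp : (f ≫ e.inv) ≫ e.hom = 𝟙 P ≫ f))
      (by exact (by simp : (e.hom ≫ g) ≫ 𝟙 Q = e.hom ≫ g))
      (by exact (by simp : h ≫ (shiftFunctor C (1:ℤ)).map (𝟙 P) = 𝟙 Q ≫ h))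

lemma coprodN_mono {A B : Set C} (hAB : A ⊆ B) : ∀ (n : ℕ), coprodN C A n ⊆ coprodN C B n
  | 0 => fun _ hX => hX
  | 1 => fun _ hX => addClos_mono hAB hX
  | (n+2) => by
    rintro Z ⟨P, Q, f, g, h, hP, hQ, hT⟩
    exact ⟨P, Q, f, g, h, addClos_mono hAB hP, coprodN_mono hAB (n+1) hQ, hT⟩

/-- Transfer of a factorization from the shifted level. -/
lemma descend_of_shift {Z Z' W : C} (χ : Z ⟶ Z') (θ : Z ⟶ W)
    (φ₁ : (Z'⟦(1:ℤ)⟧ : C) ⟶ (W⟦(1:ℤ)⟧ : C)) (h : χ⟦(1:ℤ)⟧' ≫ φ₁ = θ⟦(1:ℤ)⟧') :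
    ∃ φ : Z' ⟶ W, χ ≫ φ = θ := by
  let ε := shiftFunctorCompIsoId C (1:ℤ) (-1:ℤ) (by ring)
  refine ⟨ε.inv.app Z' ≫ φ₁⟦(-1:ℤ)⟧' ≫ ε.hom.app W, ?_⟩
  have h1 : χ ≫ ε.inv.app Z' = ε.inv.app Z ≫ (χ⟦(1:ℤ)⟧')⟦(-1:ℤ)⟧' := by
    simpa using (ε.inv.naturality χ)
  rw [← Category.assoc, h1, Category.assoc, ← Category.assoc (((χ⟦(1:ℤ)⟧')⟦(-1:ℤ)⟧')),
    ← Functor.map_comp, h]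
  have h2 : (θ⟦(1:ℤ)⟧')⟦(-1:ℤ)⟧' ≫ ε.hom.app W = ε.hom.app Z ≫ θ := by
    simpa using (ε.hom.naturality θ)
  rw [h2, ← Category.assoc]
  simp [ε]

/-- Lift a map defined at the shifted level through a descent property. -/
lemma descend_up {Y Yt V : C} (χ : Y ⟶ Yt) (ε : (Y⟦(1:ℤ)⟧ : C) ⟶ V)
    (H : ∀ θ : Y ⟶ (V⟦(-1:ℤ)⟧ : C), ∃ ρ, χ ≫ ρ = θ) :
    ∃ ρ : (Yt⟦(1:ℤ)⟧ : C) ⟶ V, χ⟦(1:ℤ)⟧' ≫ ρ = ε := by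
  let εiso := shiftFunctorCompIsoId C (1:ℤ) (-1:ℤ) (by ring)
  let δiso := shiftFunctorCompIsoId C (-1:ℤ) (1:ℤ) (by ring)
  obtain ⟨ρ', hρ'⟩ := H (εiso.inv.app Y ≫ ε⟦(-1:ℤ)⟧')
  refine ⟨ρ'⟦(1:ℤ)⟧' ≫ δiso.hom.app V, ?_⟩
  rw [← Category.assoc, ← Functor.map_comp, hρ', Functor.map_comp, Category.assoc]
  have h2 : (ε⟦(-1:ℤ)⟧')⟦(1:ℤ)⟧' ≫ δiso.hom.app V = δiso.hom.app (Y⟦(1:ℤ)⟧) ≫ ε := by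
    simpa using (δiso.hom.naturality ε)
  rw [h2, ← Category.assoc]
  have h3 : (εiso.inv.app Y)⟦(1:ℤ)⟧' = δiso.inv.app ((Y⟦(1:ℤ)⟧ : C)) := by
    exact shift_shiftFunctorCompIsoId_inv_app (1:ℤ) (-1:ℤ) (by ring) Y
  rw [h3]
  simp [δiso]

/-- Main induction: every tower over all shifts can be "cleaned" to a tower over
shifts in `[1-B-m(d+1), ∞)` through which all maps to `B`-vanishing targets factor
uniquely. -/
lemma cleanTower {G : C} {d : ℕ}
    (hd : ∀ i : ℤ, (d : ℤ) + 1 ≤ i → ∀ f : (G⟦i⟧ : C) ⟶ G, f = 0) :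
    ∀ (m : ℕ), ∀ (B A : ℤ), A ≤ 1 - B - (m:ℤ)*((d:ℤ)+1) →
    ∀ (Z : C), Z ∈ coprodN C (shiftsOf C G Set.univ) (m+1) →
    ∃ (Zt : C), Zt ∈ coprodN C (shiftsOf C G (Set.Ici A)) (m+1) ∧
    ∃ χ : Z ⟶ Zt,
      (∀ (W : C), GVan G B W → ∀ θ : Z ⟶ W, ∃ φ : Zt ⟶ W, χ ≫ φ = θ) ∧
      (∀ (W : C), GVan G B W → ∀ φ : Zt ⟶ W, χ ≫ φ = 0 → φ = 0) := by
  intro m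
  induction m with
  | zero =>
    intro B A hA Z hZ
    obtain ⟨Xb, Xg, hsum, hXb, hXg⟩ := addClos_split B hZ
    obtain ⟨i₁, i₂, p₁, p₂, h1, h2, h3, h4, h5⟩ := hsum
    have hA1 : A ≤ 1 - B := by push_cast at hA; linarith
    refine ⟨Xg, addClos_mono (shiftsOf_mono (Set.Ici_subset_Ici.mpr hA1)) hXg, p₂, ?_, ?_⟩
    · intro W hW θ
      refine ⟨i₂ ≫ θ, ?_⟩
      have hb : i₁ ≫ θ = 0 := src_vanish (by omega) hXb hW _
      have hh : (p₁ ≫ i₁ + p₂ ≫ i₂) ≫ θ = θ := by rw [h5, Category.id_comp]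
      rw [Preadditive.add_comp, Category.assoc, Category.assoc, hb, Limits.comp_zero,
        zero_add] at hh
      exact hh
    · intro W hW φ h0
      rw [← Category.id_comp φ, ← h2, Category.assoc, h0, Limits.comp_zero]
  | succ m ih =>
    intro B A hA Z hZ
    obtain ⟨X, Y, a, b, c, hX, hY, hT⟩ := hZ
    obtain ⟨Xb, Xg, hsum, hXb, hXg⟩ := addClos_split B hX
    obtain ⟨ib, ig, pb, pg, hb1, hb2, hb3, hb4, hb5⟩ := hsum
    have hAle : A ≤ 1 - B := by
      push_cast at hA
      nlinarith [hA, mul_nonneg (by positivity : (0:ℤ) ≤ (m:ℤ)+1) (by positivity : (0:ℤ) ≤ (d:ℤ)+1)]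
    set cg : Y ⟶ ((Xg⟦(1:ℤ)⟧ : C)) := c ≫ pg⟦(1:ℤ)⟧' with hcg
    obtain ⟨Z₁, aa, bb, hT₁⟩ := distinguished_cocone_triangle₂ cg
    obtain ⟨χ₁, hχa, hχb⟩ := complete_distinguished_triangle_morphism₂ (Triangle.mk a b c)
      (Triangle.mk aa bb cg) hT hT₁ pg (𝟙 Y) (by exact (by rw [Category.id_comp] : c ≫ pg⟦(1:ℤ)⟧' = 𝟙 Y ≫ cg))
    change @Quiver.Hom C CategoryStruct.toQuiver Z Z₁ at χ₁
    change a ≫ χ₁ = pg ≫ aa at hχa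
    change b ≫ 𝟙 Y = χ₁ ≫ bb at hχb
    change Z ⟶ Z₁ at χ₁
    have hχb' : b = χ₁ ≫ bb := by rw [← hχb, Category.comp_id]
    -- Stage 1: descent through χ₁
    have desc₁ : ∀ (W : C), GVan G B W → ∀ θ : Z ⟶ W, ∃ φ : Z₁ ⟶ W, χ₁ ≫ φ = θ := by
      intro W hW θ
      have hbad : ∀ f : Xb ⟶ W, f = 0 := fun f => src_vanish (by omega) hXb hW f
      have key : pg ≫ ig ≫ a ≫ θ = a ≫ θ := by
        have h2' : (pb ≫ ib + pg ≫ ig) ≫ (a ≫ θ) = 𝟙 X ≫ (a ≫ θ) := by rw [hb5]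
        simp only [Preadditive.add_comp, Category.assoc, Category.id_comp] at h2'
        rw [show ib ≫ a ≫ θ = 0 from hbad _, Limits.comp_zero, zero_add] at h2'
        exact h2'
      have h31 : c ≫ a⟦(1:ℤ)⟧' = 0 := comp_distTriang_mor_zero₃₁ _ hT
      have hcgt : cg ≫ (-((ig ≫ a ≫ θ)⟦(1:ℤ)⟧')) = 0 := by
        rw [Preadditive.comp_neg, neg_eq_zero, hcg, Category.assoc, ← Functor.map_comp, key,
          Functor.map_comp, ← Category.assoc, h31, Limits.zero_comp]
      obtain ⟨g₀, hg₀⟩ := Triangle.yoneda_exact₃ _ (rot_of_distTriang _ hT₁)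
        (-((ig ≫ a ≫ θ)⟦(1:ℤ)⟧')) (by exact hcgt)
      change @Quiver.Hom C CategoryStruct.toQuiver ((Z₁⟦(1:ℤ)⟧ : C)) ((W⟦(1:ℤ)⟧ : C)) at g₀
      change -((ig ≫ a ≫ θ)⟦(1:ℤ)⟧') = (-(aa⟦(1:ℤ)⟧')) ≫ g₀ at hg₀
      rw [Preadditive.neg_comp, neg_inj] at hg₀
      -- hg₀ : (ig ≫ a ≫ θ)⟦1⟧' = aa⟦1⟧' ≫ g₀
      have hδ0 : ((Triangle.mk a b c).rotate.rotate).mor₂ ≫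
          (χ₁⟦(1:ℤ)⟧' ≫ g₀ - θ⟦(1:ℤ)⟧') = 0 := by
        change (-(a⟦(1:ℤ)⟧')) ≫ (χ₁⟦(1:ℤ)⟧' ≫ g₀ - θ⟦(1:ℤ)⟧') = 0
        rw [Preadditive.neg_comp, neg_eq_zero, Preadditive.comp_sub]
        rw [← Category.assoc, ← Functor.map_comp, hχa, Functor.map_comp, Category.assoc,
          ← hg₀, ← Functor.map_comp, key, Functor.map_comp]
        exact sub_self _
      obtain ⟨ε, hε⟩ := Triangle.yoneda_exact₃ _
        (rot_of_distTriang _ (rot_of_distTriang _ hT))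
        (χ₁⟦(1:ℤ)⟧' ≫ g₀ - θ⟦(1:ℤ)⟧') hδ0
      change @Quiver.Hom C CategoryStruct.toQuiver ((Y⟦(1:ℤ)⟧ : C)) ((W⟦(1:ℤ)⟧ : C)) at ε
      change χ₁⟦(1:ℤ)⟧' ≫ g₀ - θ⟦(1:ℤ)⟧' = (-(b⟦(1:ℤ)⟧')) ≫ ε at hε
      rw [Preadditive.neg_comp] at hε
      have hfin : χ₁⟦(1:ℤ)⟧' ≫ (g₀ + bb⟦(1:ℤ)⟧' ≫ ε) = θ⟦(1:ℤ)⟧' := by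
        rw [Preadditive.comp_add]
        have e1 : χ₁⟦(1:ℤ)⟧' ≫ bb⟦(1:ℤ)⟧' ≫ ε = b⟦(1:ℤ)⟧' ≫ ε := by
          rw [← Category.assoc, ← Functor.map_comp, ← hχb']
        rw [e1]
        rw [sub_eq_iff_eq_add] at hε
        rw [hε]
        abel
      exact descend_of_shift χ₁ θ _ hfin
    -- Stage 1: injectivity through χ₁
    have inj₁ : ∀ (W : C), GVan G B W → ∀ φ : Z₁ ⟶ W, χ₁ ≫ φ = 0 → φ = 0 := by
      intro W hW φ h0
      have haaφ : aa ≫ φ = 0 := by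
        have e1 : pg ≫ aa ≫ φ = a ≫ χ₁ ≫ φ := by
          rw [← Category.assoc, ← hχa, Category.assoc]
        have e2 : aa ≫ φ = ig ≫ a ≫ χ₁ ≫ φ := by
          rw [← e1, ← Category.assoc, hb2, Category.id_comp]
        rw [e2, h0, Limits.comp_zero, Limits.comp_zero]
      obtain ⟨h', hh'⟩ := Triangle.yoneda_exact₂ _ hT₁ φ haaφ
      change @Quiver.Hom C CategoryStruct.toQuiver Y W at h'
      change φ = bb ≫ h' at hh'
      have hbh : b ≫ h' = 0 := by
        rw [hχb', Category.assoc, ← hh', h0]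
      obtain ⟨k, hk⟩ := Triangle.yoneda_exact₃ _ hT h' (by exact hbh)
      change @Quiver.Hom C CategoryStruct.toQuiver ((X⟦(1:ℤ)⟧ : C)) W at k
      change h' = c ≫ k at hk
      have hbadk : ib⟦(1:ℤ)⟧' ≫ k = 0 :=
        src_vanish (a := -B-1) (B := B+1) (by omega) (addClos_shift_Iic hXb)
          (hW.mono (by omega)) _
      have hkdec : pg⟦(1:ℤ)⟧' ≫ ig⟦(1:ℤ)⟧' ≫ k = k := by
        have e3 : (pb⟦(1:ℤ)⟧' ≫ ib⟦(1:ℤ)⟧' + pg⟦(1:ℤ)⟧' ≫ ig⟦(1:ℤ)⟧') ≫ k = k := by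
          rw [← Functor.map_comp, ← Functor.map_comp, ← Functor.map_add, hb5,
            CategoryTheory.Functor.map_id, Category.id_comp]
        rw [Preadditive.add_comp, Category.assoc, Category.assoc, hbadk, Limits.comp_zero,
          zero_add] at e3
        exact e3
      have h23 : bb ≫ cg = 0 := comp_distTriang_mor_zero₂₃ _ hT₁
      calc φ = bb ≫ h' := hh'
        _ = bb ≫ c ≫ k := by rw [hk]
        _ = bb ≫ c ≫ (pg⟦(1:ℤ)⟧' ≫ ig⟦(1:ℤ)⟧' ≫ k) := by rw [hkdec]
        _ = (bb ≫ cg) ≫ ig⟦(1:ℤ)⟧' ≫ k := by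
              rw [hcg]
              simp only [Category.assoc]
        _ = 0 := by rw [h23, Limits.zero_comp]
    -- Stage 2: clean Y by induction
    set B₂ : ℤ := B + (d:ℤ) + 1 with hB₂def
    have hB₂Xg : GVan G B₂ ((Xg⟦(1:ℤ)⟧ : C)) := by
      have hv := gvan_of_addClos_Ici hd (le_refl ((d:ℤ)+1-(1-B))) hXg
      exact hv.shift_up.mono (by omega)
    have harith : A ≤ 1 - B₂ - (m:ℤ)*((d:ℤ)+1) := by
      push_cast at hA
      rw [hB₂def]
      nlinarith [hA]
    obtain ⟨Yt, hYt, χ₂, desc₂, inj₂⟩ := ih B₂ A harith Y hY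
    obtain ⟨φ₂, hφ₂⟩ := desc₂ ((Xg⟦(1:ℤ)⟧ : C)) hB₂Xg cg
    obtain ⟨Zt, at2, bt2, hTt⟩ := distinguished_cocone_triangle₂ φ₂
    obtain ⟨ξ, hξa, hξb⟩ := complete_distinguished_triangle_morphism₂ (Triangle.mk aa bb cg)
      (Triangle.mk at2 bt2 φ₂) hT₁ hTt (𝟙 Xg) χ₂
      (by exact (by rw [CategoryTheory.Functor.map_id, Category.comp_id]; exact hφ₂.symm :
        cg ≫ (𝟙 Xg)⟦(1:ℤ)⟧' = χ₂ ≫ φ₂))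
    change @Quiver.Hom C CategoryStruct.toQuiver Z₁ Zt at ξ
    change aa ≫ ξ = 𝟙 Xg ≫ at2 at hξa
    change bb ≫ χ₂ = ξ ≫ bt2 at hξb
    change Z₁ ⟶ Zt at ξ
    have hξa' : aa ≫ ξ = at2 := by rw [hξa, Category.id_comp]
    have hXgA : addClos C (shiftsOf C G (Set.Ici A)) Xg :=
      addClos_mono (shiftsOf_mono (Set.Ici_subset_Ici.mpr hAle)) hXg
    refine ⟨Zt, ⟨Xg, Yt, at2, bt2, φ₂, hXgA, hYt, hTt⟩, χ₁ ≫ ξ, ?_, ?_⟩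
    · -- descent for the composite
      intro W hW θ
      obtain ⟨φa, hφa⟩ := desc₁ W hW θ
      -- Lemma T (a): factor φa through ξ
      have hφ₂t : φ₂ ≫ (-((aa ≫ φa)⟦(1:ℤ)⟧')) = 0 := by
        apply inj₂ ((W⟦(1:ℤ)⟧ : C)) (hW.shift_up.mono (by omega))
        have h31 : cg ≫ aa⟦(1:ℤ)⟧' = 0 := comp_distTriang_mor_zero₃₁ _ hT₁
        rw [← Category.assoc, hφ₂, Preadditive.comp_neg, neg_eq_zero, Functor.map_comp,
          ← Category.assoc, h31, Limits.zero_comp]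
      obtain ⟨g₀, hg₀⟩ := Triangle.yoneda_exact₃ _ (rot_of_distTriang _ hTt)
        (-((aa ≫ φa)⟦(1:ℤ)⟧')) (by exact hφ₂t)
      change @Quiver.Hom C CategoryStruct.toQuiver ((Zt⟦(1:ℤ)⟧ : C)) ((W⟦(1:ℤ)⟧ : C)) at g₀
      change -((aa ≫ φa)⟦(1:ℤ)⟧') = (-(at2⟦(1:ℤ)⟧')) ≫ g₀ at hg₀
      rw [Preadditive.neg_comp, neg_inj] at hg₀
      -- hg₀ : (aa ≫ φa)⟦1⟧' = at2⟦1⟧' ≫ g₀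
      have hδ0 : ((Triangle.mk aa bb cg).rotate.rotate).mor₂ ≫
          (ξ⟦(1:ℤ)⟧' ≫ g₀ - φa⟦(1:ℤ)⟧') = 0 := by
        change (-(aa⟦(1:ℤ)⟧')) ≫ (ξ⟦(1:ℤ)⟧' ≫ g₀ - φa⟦(1:ℤ)⟧') = 0
        rw [Preadditive.neg_comp, neg_eq_zero, Preadditive.comp_sub]
        rw [← Category.assoc, ← Functor.map_comp, hξa', ← hg₀, Functor.map_comp]
        exact sub_self _
      obtain ⟨ε, hε⟩ := Triangle.yoneda_exact₃ _
        (rot_of_distTriang _ (rot_of_distTriang _ hT₁))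
        (ξ⟦(1:ℤ)⟧' ≫ g₀ - φa⟦(1:ℤ)⟧') hδ0
      change @Quiver.Hom C CategoryStruct.toQuiver ((Y⟦(1:ℤ)⟧ : C)) ((W⟦(1:ℤ)⟧ : C)) at ε
      change ξ⟦(1:ℤ)⟧' ≫ g₀ - φa⟦(1:ℤ)⟧' = (-(bb⟦(1:ℤ)⟧')) ≫ ε at hε
      rw [Preadditive.neg_comp] at hε
      obtain ⟨ρ, hρ⟩ := descend_up χ₂ ε
        (fun θ' => desc₂ _ (hW.shift_up.shift_down.mono (by omega)) θ')
      have hfin : ξ⟦(1:ℤ)⟧' ≫ (g₀ + bt2⟦(1:ℤ)⟧' ≫ ρ) = φa⟦(1:ℤ)⟧' := by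
        rw [Preadditive.comp_add]
        have e1 : ξ⟦(1:ℤ)⟧' ≫ bt2⟦(1:ℤ)⟧' ≫ ρ = bb⟦(1:ℤ)⟧' ≫ χ₂⟦(1:ℤ)⟧' ≫ ρ := by
          rw [← Category.assoc, ← Functor.map_comp, ← hξb, Functor.map_comp, Category.assoc]
        rw [e1, hρ]
        rw [sub_eq_iff_eq_add] at hε
        rw [hε]
        abel
      obtain ⟨φ₃, hφ₃⟩ := descend_of_shift ξ φa _ hfin
      exact ⟨φ₃, by rw [Category.assoc, hφ₃, hφa]⟩
    · -- injectivity for the composite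
      intro W hW φ h0
      have h0' : ξ ≫ φ = 0 := inj₁ W hW (ξ ≫ φ) (by rw [← Category.assoc]; exact h0)
      have hat2φ : at2 ≫ φ = 0 := by rw [← hξa', Category.assoc, h0', Limits.comp_zero]
      obtain ⟨h', hh'⟩ := Triangle.yoneda_exact₂ _ hTt φ hat2φ
      change @Quiver.Hom C CategoryStruct.toQuiver Yt W at h'
      change φ = bt2 ≫ h' at hh'
      have hbr : bb ≫ (χ₂ ≫ h') = 0 := by
        rw [← Category.assoc, hξb, Category.assoc, ← hh', h0']
      obtain ⟨k, hk⟩ := Triangle.yoneda_exact₃ _ hT₁ (χ₂ ≫ h') hbr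
      change @Quiver.Hom C CategoryStruct.toQuiver ((Xg⟦(1:ℤ)⟧ : C)) W at k
      change χ₂ ≫ h' = cg ≫ k at hk
      have hz : χ₂ ≫ (h' - φ₂ ≫ k) = 0 := by
        rw [Preadditive.comp_sub, hk, ← Category.assoc, hφ₂, sub_self]
      have hh'2 : h' = φ₂ ≫ k := by
        have := inj₂ W (hW.mono (by omega)) _ hz
        rwa [sub_eq_zero] at this
      have h23 : bt2 ≫ φ₂ = 0 := comp_distTriang_mor_zero₂₃ _ hTt
      rw [hh', hh'2, ← Category.assoc, h23, Limits.zero_comp]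

end Aux

/-- If `𝒮 = ⟨G⟩_{n+1}` (so `G` is a strong generator) and
`Hom(G[i], G) = 0` for all `i ≥ d + 1`, then `fd(𝒮, G) ≤ n(d+1) < ∞`: every `F` with
`Hom(G[j], F) = 0` for all `j ≥ 1` lies in `⟨G⟩_{n+1}^{[-n(d+1),∞)} ⊆ ⟨G⟩^{[0,∞)}[n(d+1)]`. -/
theorem fd_le_of_strong_generator
    (C : Type u) [Category.{v} C] [HasZeroObject C] [HasShift C ℤ]
    [Preadditive C] [∀ n : ℤ, (shiftFunctor C n).Additive] [Pretriangulated C]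
    (G : C) (n d : ℕ)
    (hstrong : ∀ X : C, X ∈ genN C G Set.univ (n+1))
    (hd : ∀ i : ℤ, (d : ℤ) + 1 ≤ i → ∀ f : (G⟦i⟧ : C) ⟶ G, f = 0) :
    (∀ F ∈ rPerpShifts C G (Set.Iic (-1)),
      F ∈ genN C G (Set.Ici (-((n : ℤ) * ((d : ℤ) + 1)))) (n+1)) ∧
    fdLE C G ((n : ℤ) * ((d : ℤ) + 1)) := by
  have main : ∀ F ∈ rPerpShifts C G (Set.Iic (-1)),
      F ∈ genN C G (Set.Ici (-((n : ℤ) * ((d : ℤ) + 1)))) (n+1) := by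
    intro F hF
    have hvan : GVan G 1 F := by
      intro j hj f
      have h := hF (-j) (Set.mem_Iic.mpr (by omega))
      rw [neg_neg] at h
      exact h f
    obtain ⟨Zb, Fc, hZb, hsumF⟩ := hstrong F
    obtain ⟨Zt, hZt, χ, desc, inj⟩ := cleanTower hd n 1 (-((n : ℤ) * ((d : ℤ) + 1)))
      (le_of_eq (by ring)) Zb hZb
    obtain ⟨i₁, i₂, p₁, p₂, h1, h2, h3, h4, h5⟩ := hsumF
    obtain ⟨φ, hφ⟩ := desc F hvan p₁
    have hsplit : (i₁ ≫ χ) ≫ φ = 𝟙 F := by rw [Category.assoc, hφ, h1]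
    obtain ⟨D, g2, h2', hTD⟩ := distinguished_cocone_triangle (i₁ ≫ χ)
    exact ⟨Zt, D, hZt, isDirSum_of_splitMono _ hTD φ hsplit⟩
  exact ⟨main, fun X hX => ⟨n, main X hX⟩⟩

end Paper
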